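/- Let F be an algebra of partial functions, let a ∈ F, and let S ⊆ F be a finite subset such that the supremum ⨆S exists in (F, ⊆). Then the supremum of {a∘s : s ∈ S} exists in (F, ⊆) and equals a∘(⨆S). That is, composition in F is left-distributive over finite joins. -/

import Mathlib

/-! Algebras of partial functions: basic definitions. -/

namespace PFAlg

variable {X Y : Type*}

/-- `f ⊆ X × X` is a partial function. -/
def IsPF (f : Set (X × X)) : Prop :=
  ∀ ⦃x y z : X⦄, (x, y) ∈ f → (x, z) ∈ f → y = z

/-- Composition of partial functions (binary relations), written left-to-right:
`f ∘ g = {(x,z) : ∃ y, (x,y) ∈ f and (y,z) ∈ g}`. -/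
def comp (f g : Set (X × X)) : Set (X × X) :=
  {p | ∃ y, (p.1, y) ∈ f ∧ (y, p.2) ∈ g}

/-- Antidomain: the diagonal of the set of points where `f` is undefined. -/
def adom (f : Set (X × X)) : Set (X × X) :=
  {p | p.1 = p.2 ∧ ∀ y, (p.1, y) ∉ f}

/-- An algebra of partial functions on the base `X`: a nonempty collection of
partial functions closed under composition, intersection and antidomain. -/
structure IsPFAlgebra (F : Set (Set (X × X))) : Prop where
  nonempty : F.Nonempty
  pf : ∀ f ∈ F, IsPF f
  comp_mem : ∀ f ∈ F, ∀ g ∈ F, comp f g ∈ F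
  inter_mem : ∀ f ∈ F, ∀ g ∈ F, f ∩ g ∈ F
  adom_mem : ∀ f ∈ F, adom f ∈ F

/-- `m` is the supremum of `S` in the poset `(F, ⊆)`. -/
def IsLUBIn (F S : Set (Set (X × X))) (m : Set (X × X)) : Prop :=
  m ∈ F ∧ (∀ s ∈ S, s ⊆ m) ∧ ∀ c ∈ F, (∀ s ∈ S, s ⊆ c) → m ⊆ c

/-- `m` is the infimum of `S` in the poset `(F, ⊆)`. -/
def IsGLBIn (F S : Set (Set (X × X))) (m : Set (X × X)) : Prop :=
  m ∈ F ∧ (∀ s ∈ S, m ⊆ s) ∧ ∀ c ∈ F, (∀ s ∈ S, c ⊆ s) → c ⊆ m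

/-- `b` is an atom of `F`: a minimal element of `F \ {∅}`. -/
def IsAtomOf (F : Set (Set (X × X))) (b : Set (X × X)) : Prop :=
  b ∈ F ∧ b ≠ ∅ ∧ ∀ g ∈ F, g ≠ ∅ → g ⊆ b → g = b

/-- `F` is atomic: every nonempty member contains an atom. -/
def Atomic (F : Set (Set (X × X))) : Prop :=
  ∀ f ∈ F, f ≠ ∅ → ∃ b, IsAtomOf F b ∧ b ⊆ f

/-- A representation of `F` by partial functions over the base `Y`. -/
structure IsRep (F : Set (Set (X × X))) (θ : Set (X × X) → Set (Y × Y)) : Prop where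
  injOn : Set.InjOn θ F
  pf : ∀ f ∈ F, IsPF (θ f)
  comp_eq : ∀ f ∈ F, ∀ g ∈ F, θ (comp f g) = comp (θ f) (θ g)
  inter_eq : ∀ f ∈ F, ∀ g ∈ F, θ (f ∩ g) = θ f ∩ θ g
  adom_eq : ∀ f ∈ F, θ (adom f) = adom (θ f)

/-- `θ` is meet complete: it turns existing infima of nonempty subsets into intersections. -/
def MeetComplete (F : Set (Set (X × X))) (θ : Set (X × X) → Set (Y × Y)) : Prop :=
  ∀ S ⊆ F, S.Nonempty → ∀ m, IsGLBIn F S m → θ m = ⋂ s ∈ S, θ s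

/-- `θ` is join complete: it turns existing suprema into unions. -/
def JoinComplete (F : Set (Set (X × X))) (θ : Set (X × X) → Set (Y × Y)) : Prop :=
  ∀ S ⊆ F, ∀ m, IsLUBIn F S m → θ m = ⋃ s ∈ S, θ s

/-- `θ` is an atomic representation. -/
def AtomicRep (F : Set (Set (X × X))) (θ : Set (X × X) → Set (Y × Y)) : Prop :=
  ∀ f ∈ F, ∀ p ∈ θ f, ∃ b, IsAtomOf F b ∧ p ∈ θ b

/-- Composition in `F` is completely left-distributive over joins. -/
def CompLeftDistribJoins (F : Set (Set (X × X))) : Prop :=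
  ∀ a ∈ F, ∀ S ⊆ F, ∀ m, IsLUBIn F S m → IsLUBIn F ((fun s => comp a s) '' S) (comp a m)

/-- Composition in `F` is completely left-distributive over meets. -/
def CompLeftDistribMeets (F : Set (Set (X × X))) : Prop :=
  ∀ a ∈ F, ∀ S ⊆ F, S.Nonempty → ∀ m, IsGLBIn F S m →
    IsGLBIn F ((fun s => comp a s) '' S) (comp a m)

end PFAlg

open PFAlg

private lemma pfalg_empty_mem {X : Type*} {F : Set (Set (X × X))} (hF : IsPFAlgebra F) :
    (∅ : Set (X × X)) ∈ F := by
  obtain ⟨f, hf⟩ := hF.nonempty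
  have h : f ∩ adom f = ∅ := by
    ext ⟨x, y⟩
    simp only [Set.mem_inter_iff, Set.mem_empty_iff_false, iff_false, not_and]
    intro h1 hmem
    exact hmem.2 y h1
  rw [← h]; exact hF.inter_mem f hf _ (hF.adom_mem f hf)

private lemma pfalg_exists_diag {X : Type*} {F : Set (Set (X × X))} (hF : IsPFAlgebra F)
    (S : Set (Set (X × X))) (hfin : S.Finite) (hS : S ⊆ F) :
    ∃ e ∈ F, e = {p : X × X | p.1 = p.2 ∧ ∀ s ∈ S, ∀ w, (p.1, w) ∉ s} := by
  refine Set.Finite.induction_on (motive := fun T _ => T ⊆ F → ∃ e ∈ F,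
      e = {p : X × X | p.1 = p.2 ∧ ∀ s ∈ T, ∀ w, (p.1, w) ∉ s}) S hfin ?_ ?_ hS
  · intro _
    refine ⟨adom ∅, hF.adom_mem _ (pfalg_empty_mem hF), ?_⟩
    ext ⟨x, y⟩
    simp [adom]
  · intro s T hsT hT ih hS
    obtain ⟨e, heF, he⟩ := ih (fun t ht => hS (Set.mem_insert_of_mem _ ht))
    refine ⟨comp (adom s) e,
      hF.comp_mem _ (hF.adom_mem s (hS (Set.mem_insert _ _))) _ heF, ?_⟩
    ext ⟨x, y⟩
    simp only [comp, adom, he, Set.mem_setOf_eq]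
    constructor
    · rintro ⟨z, ⟨rfl, hns⟩, rfl, hall⟩
      refine ⟨rfl, fun t ht w => ?_⟩
      rcases ht with rfl | ht
      · exact hns w
      · exact hall t ht w
    · rintro ⟨rfl, h⟩
      exact ⟨x, ⟨rfl, fun w => h s (Set.mem_insert _ _) w⟩, rfl,
        fun t ht w => h t (Set.mem_insert_of_mem _ ht) w⟩

private lemma pfalg_lub_eq_sUnion {X : Type*} {F : Set (Set (X × X))} (hF : IsPFAlgebra F)
    {S : Set (Set (X × X))} (hS : S ⊆ F) (hfin : S.Finite)
    {m : Set (X × X)} (hm : IsLUBIn F S m) : m = ⋃₀ S := by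
  obtain ⟨hmF, hub, hlub⟩ := hm
  obtain ⟨e, heF, he⟩ := pfalg_exists_diag hF S hfin hS
  have hcF : comp (adom e) m ∈ F := hF.comp_mem _ (hF.adom_mem e heF) _ hmF
  have hubc : ∀ s ∈ S, s ⊆ comp (adom e) m := by
    rintro s hs ⟨x, y⟩ hp
    refine ⟨x, ⟨rfl, ?_⟩, hub s hs hp⟩
    intro z hz
    rw [he] at hz
    exact hz.2 s hs y hp
  have hmc : m ⊆ comp (adom e) m := hlub _ hcF hubc
  apply Set.Subset.antisymm
  · rintro ⟨x, y⟩ hxy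
    obtain ⟨z, ⟨-, hz⟩, -⟩ := hmc hxy
    have hxx : (x, x) ∉ e := hz x
    rw [he] at hxx
    have hxx' : ∃ s ∈ S, ∃ w, (x, w) ∈ s := by
      by_contra hcon
      push_neg at hcon
      exact hxx ⟨rfl, fun s hs w hw => hcon s hs w hw⟩
    obtain ⟨s, hs, w, hw⟩ := hxx'
    have hwm : (x, w) ∈ m := hub s hs hw
    have : w = y := hF.pf m hmF hwm hxy
    exact ⟨s, hs, this ▸ hw⟩
  · exact Set.sUnion_subset hub

open PFAlg in
/-- composition in an algebra of partial functions is left-distributive over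
finite joins: if `S` is finite and `⨆S` exists in `(F, ⊆)` then the supremum of
`{a∘s : s ∈ S}` exists and equals `a∘(⨆S)`. -/
theorem stmt8 {X : Type*} (F : Set (Set (X × X))) (hF : IsPFAlgebra F)
    (a : Set (X × X)) (ha : a ∈ F)
    (S : Set (Set (X × X))) (hS : S ⊆ F) (hfin : S.Finite)
    (m : Set (X × X)) (hm : IsLUBIn F S m) :
    IsLUBIn F ((fun s => comp a s) '' S) (comp a m) := by
  obtain ⟨hmF, hub, hlub⟩ := hm
  refine ⟨hF.comp_mem a ha m hmF, ?_, ?_⟩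
  · rintro t ⟨s, hs, rfl⟩ ⟨x, z⟩ ⟨y, hxy, hyz⟩
    exact ⟨y, hxy, hub s hs hyz⟩
  · intro c hcF hc
    have hmu := pfalg_lub_eq_sUnion hF hS hfin ⟨hmF, hub, hlub⟩
    rintro ⟨x, z⟩ ⟨y, hxy, hyz⟩
    rw [hmu] at hyz
    obtain ⟨s, hs, hys⟩ := hyz
    exact hc _ ⟨s, hs, rfl⟩ ⟨y, hxy, hys⟩
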